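/- (LP sensitivity via complementary slackness, ℓ1 case, '+' variant.) Consider the linear program P: minimize ∑_k(w̄_k⁺ + w̄_k⁻) + C(∑_i ξ̄_i + 2∑_i z̄_i) + w̃ over variables (w̄⁺, w̄⁻, b̄, ξ̄, z̄) subject to, for each i: y_i(∑_k(w̄_k⁺ − w̄_k⁻)x_{ik} + b̄) ≥ 1 − ξ̄_i − y_i w̃ x_{i k₀} − M_i z̄_i, plus box and nonnegativity constraints that do not involve the coordinate w̄_{k₀}⁺ except for the bound w̄_{k₀}⁺ ≥ −w̃. Suppose P has an optimal solution with w̄_{k₀}⁺ = 0 and optimal value Z, and let ᾱ ∈ ℝ^n_{≥0} be optimal dual multipliers for the displayed constraints satisfying complementary slackness. Then for any ŵ > −w̃, the optimal value Ẑ of P with the added constraint w̄_{k₀}⁺ = ŵ satisfies Z + ŵ·(1 − ∑_{i=1}^n ᾱ_i y_i x_{i k₀}) ≤ Ẑ. -/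
import Mathlib


open Finset

/-- LP sensitivity via complementary slackness (ℓ1 case, '+' variant).
If the LP P has an optimal solution with w̄_{k₀}⁺ = 0 and value Z, with optimal dual
multipliers ᾱ for the margin constraints, then for any ŵ > −w̃ the optimal value Ẑ of P
with the added constraint w̄_{k₀}⁺ = ŵ satisfies Z + ŵ(1 − ∑ᾱ_i y_i x_{ik₀}) ≤ Ẑ. -/
theorem lp_sensitivity_l1_plus
    (n d : ℕ) (x : Fin n → Fin d → ℝ) (y : Fin n → ℝ) (hy : ∀ i, y i = 1 ∨ y i = -1)
    (C : ℝ) (hC : 0 < C) (M : Fin n → ℝ) (hM : ∀ i, 0 ≤ M i)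
    (k₀ : Fin d) (wt : ℝ) (hwt : 0 < wt)
    -- the box/nonnegativity feasible set S (not involving w̄_{k₀}⁺ except w̄_{k₀}⁺ ≥ −w̃)
    (S : Set ((Fin d → ℝ) × (Fin d → ℝ) × ℝ × (Fin n → ℝ) × (Fin n → ℝ)))
    (hSbd : ∀ v ∈ S, -wt ≤ v.1 k₀)
    (hSupd : ∀ v ∈ S, ∀ t : ℝ, -wt ≤ t → (Function.update v.1 k₀ t, v.2) ∈ S)
    -- objective of P
    (obj : ((Fin d → ℝ) × (Fin d → ℝ) × ℝ × (Fin n → ℝ) × (Fin n → ℝ)) → ℝ)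
    (hobj : ∀ v, obj v = (∑ k, (v.1 k + v.2.1 k)) +
      C * ((∑ i, v.2.2.2.1 i) + 2 * ∑ i, v.2.2.2.2 i) + wt)
    -- slacks of the displayed margin constraints
    (g : ((Fin d → ℝ) × (Fin d → ℝ) × ℝ × (Fin n → ℝ) × (Fin n → ℝ)) → Fin n → ℝ)
    (hg : ∀ v i, g v i = y i * ((∑ k, (v.1 k - v.2.1 k) * x i k) + v.2.2.1) -
      (1 - v.2.2.2.1 i - y i * wt * x i k₀ - M i * v.2.2.2.2 i))
    -- primal optimum of P with w̄_{k₀}⁺ = 0 and value Z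
    (Z : ℝ) (vstar : (Fin d → ℝ) × (Fin d → ℝ) × ℝ × (Fin n → ℝ) × (Fin n → ℝ))
    (hvS : vstar ∈ S) (hvg : ∀ i, 0 ≤ g vstar i) (hvk : vstar.1 k₀ = 0)
    (hvZ : obj vstar = Z)
    (hvopt : ∀ v ∈ S, (∀ i, 0 ≤ g v i) → Z ≤ obj v)
    -- optimal dual multipliers: the Lagrangian attains minimum value Z at the optimum
    (α : Fin n → ℝ) (hα : ∀ i, 0 ≤ α i)
    (L : ((Fin d → ℝ) × (Fin d → ℝ) × ℝ × (Fin n → ℝ) × (Fin n → ℝ)) → ℝ)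
    (hL : ∀ v, L v = obj v - ∑ i, α i * g v i)
    (hLmin : ∀ v ∈ S, v.1 k₀ = 0 → Z ≤ L v) (hLstar : L vstar = Z)
    -- the perturbed problem: P with added constraint w̄_{k₀}⁺ = ŵ, optimal value Ẑ
    (wh : ℝ) (hwh : -wt < wh)
    (v' : (Fin d → ℝ) × (Fin d → ℝ) × ℝ × (Fin n → ℝ) × (Fin n → ℝ))
    (hv'S : v' ∈ S) (hv'g : ∀ i, 0 ≤ g v' i) (hv'k : v'.1 k₀ = wh)
    (Zh : ℝ) (hZh : obj v' = Zh)
    (hv'opt : ∀ v ∈ S, (∀ i, 0 ≤ g v i) → v.1 k₀ = wh → Zh ≤ obj v) :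
    Z + wh * (1 - ∑ i, α i * (y i * x i k₀)) ≤ Zh := by
  set v'' : (Fin d → ℝ) × (Fin d → ℝ) × ℝ × (Fin n → ℝ) × (Fin n → ℝ) :=
    (Function.update v'.1 k₀ 0, v'.2) with hv''
  have hS'' : v'' ∈ S := hSupd v' hv'S 0 (by linarith)
  have hk'' : v''.1 k₀ = 0 := by simp [hv'']
  have hZL : Z ≤ L v'' := hLmin v'' hS'' hk''
  -- obj v'' = obj v' - wh
  have hsum1 : ∑ k, v''.1 k = (∑ k, v'.1 k) - wh := by
    simp only [hv'']
    rw [Finset.sum_update_of_mem (Finset.mem_univ k₀), Finset.sdiff_singleton_eq_erase,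
      Finset.sum_erase_eq_sub (Finset.mem_univ k₀), hv'k]
    ring
  have hobj'' : obj v'' = obj v' - wh := by
    rw [hobj, hobj]
    simp only [hv'']
    have : ∑ k, (v''.1 k + v'.2.1 k) = ((∑ k, v'.1 k) - wh) + ∑ k, v'.2.1 k := by
      rw [Finset.sum_add_distrib, hsum1]
    simp only [hv''] at this
    rw [this, Finset.sum_add_distrib]
    ring
  -- g v'' i = g v' i - y i * x i k₀ * wh
  have hg'' : ∀ i, g v'' i = g v' i - y i * (x i k₀ * wh) := by
    intro i
    rw [hg, hg]
    have h2 : ∑ k, (v''.1 k - v'.2.1 k) * x i k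
        = (∑ k, (v'.1 k - v'.2.1 k) * x i k) - x i k₀ * wh := by
      have : ∀ k, (v''.1 k - v'.2.1 k) * x i k
          = (v'.1 k - v'.2.1 k) * x i k - (if k = k₀ then x i k₀ * wh else 0) := by
        intro k
        by_cases hk : k = k₀
        · subst hk
          simp [hv'', Function.update_self, hv'k]
          ring
        · simp [hv'', Function.update_of_ne hk, hk]
      rw [Finset.sum_congr rfl (fun k _ => this k), Finset.sum_sub_distrib,
        Finset.sum_ite_eq' Finset.univ k₀ (fun _ => x i k₀ * wh)]
      simp
    simp only [hv''] at h2 ⊢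
    rw [h2]
    ring
  have hLdiff : L v'' = L v' - wh * (1 - ∑ i, α i * (y i * x i k₀)) := by
    rw [hL, hL, hobj'']
    have : ∑ i, α i * g v'' i
        = (∑ i, α i * g v' i) - wh * ∑ i, α i * (y i * x i k₀) := by
      rw [Finset.mul_sum, ← Finset.sum_sub_distrib]
      refine Finset.sum_congr rfl fun i _ => ?_
      rw [hg'' i]; ring
    rw [this]
    ring
  have hLle : L v' ≤ obj v' := by
    rw [hL]
    have : 0 ≤ ∑ i, α i * g v' i :=
      Finset.sum_nonneg fun i _ => mul_nonneg (hα i) (hv'g i)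
    linarith
  have := hZL
  rw [hLdiff] at this
  linarith
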